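/- Let f(x) = (1/2)xᵀAx + bᵀx with A symmetric positive definite, x ≥ 0 componentwise, and p be a descent direction at x (pᵀ(Ax + b) < 0). Define η' = −pᵀ(Ax + b)/(pᵀAp), and for each index ℓ set η̂_ℓ = −x_ℓ/p_ℓ if p_ℓ < 0 and η̂_ℓ = +∞ otherwise. Then η* = min(η', min_ℓ η̂_ℓ) is a global minimizer of f(x + ηp) over the set {η ≥ 0 : x + ηp ≥ 0}. -/

import Mathlib

open Matrix

/-- with `η' = −pᵀ(Ax+b)/(pᵀAp)` and `η̂_ℓ = −x_ℓ/p_ℓ` when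
`p_ℓ < 0` (`+∞` otherwise), the step `η* = min(η', min_ℓ η̂_ℓ)` is a global
minimizer of `η ↦ f(x + ηp)` over `{η ≥ 0 : x + ηp ≥ 0}`. -/
theorem stmt5 {n : ℕ} (A : Matrix (Fin n) (Fin n) ℝ) (hA : A.PosDef)
    (hAsymm : A.IsSymm) (b x p : Fin n → ℝ) (hx : 0 ≤ x)
    (hdesc : p ⬝ᵥ (A.mulVec x + b) < 0) (ηstar : ℝ)
    (hηstar : (ηstar : WithTop ℝ) =
      min ((-(p ⬝ᵥ (A.mulVec x + b)) / (p ⬝ᵥ A.mulVec p) : ℝ) : WithTop ℝ)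
        (Finset.univ.inf fun ℓ : Fin n =>
          if p ℓ < 0 then ((-(x ℓ) / p ℓ : ℝ) : WithTop ℝ) else ⊤)) :
    let f : (Fin n → ℝ) → ℝ := fun z => (1/2) * (z ⬝ᵥ A.mulVec z) + b ⬝ᵥ z
    (0 ≤ ηstar ∧ 0 ≤ x + ηstar • p) ∧
      ∀ η : ℝ, 0 ≤ η → 0 ≤ x + η • p → f (x + ηstar • p) ≤ f (x + η • p) := by
  intro f
  have hp : p ≠ 0 := by
    rintro rfl
    simp at hdesc
  set c : ℝ := p ⬝ᵥ (A.mulVec x + b) with hc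
  set a : ℝ := p ⬝ᵥ A.mulVec p with ha
  have hapos : 0 < a := by simpa using hA.dotProduct_mulVec_pos hp
  set η' : ℝ := -c / a with hη'
  have hη'pos : 0 < η' := div_pos (by linarith) hapos
  have hη'a : η' * a = -c := by
    rw [hη']; field_simp
  -- symmetry
  have hsym : x ⬝ᵥ A.mulVec p = p ⬝ᵥ A.mulVec x := by
    rw [Matrix.dotProduct_mulVec, ← Matrix.mulVec_transpose, hAsymm.eq,
      dotProduct_comm]
  -- quadratic expansion
  have hf : ∀ η : ℝ, f (x + η • p) = f x + η * c + η ^ 2 / 2 * a := by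
    intro η
    simp only [f, hc, ha, Matrix.mulVec_add, Matrix.mulVec_smul, dotProduct_add,
      add_dotProduct, dotProduct_smul, smul_dotProduct, smul_eq_mul]
    rw [hsym, dotProduct_comm b p]
    ring
  -- bound above by η'
  have hstar_le : ηstar ≤ η' := by
    have := hηstar.le.trans (min_le_left _ _)
    exact_mod_cast this
  -- bound above by each hat
  have hstar_hat : ∀ ℓ : Fin n, p ℓ < 0 → ηstar ≤ -(x ℓ) / p ℓ := by
    intro ℓ hℓ
    have h1 : (ηstar : WithTop ℝ) ≤ (Finset.univ.inf fun ℓ : Fin n =>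
        if p ℓ < 0 then ((-(x ℓ) / p ℓ : ℝ) : WithTop ℝ) else ⊤) :=
      hηstar.le.trans (min_le_right _ _)
    have h2 := h1.trans (Finset.inf_le (Finset.mem_univ ℓ))
    rw [if_pos hℓ] at h2
    exact_mod_cast h2
  -- nonnegativity
  have hstar0 : 0 ≤ ηstar := by
    have : ((0 : ℝ) : WithTop ℝ) ≤ (ηstar : WithTop ℝ) := by
      rw [hηstar]
      refine le_min (by exact_mod_cast hη'pos.le) (Finset.le_inf fun ℓ _ => ?_)
      by_cases hℓ : p ℓ < 0
      · rw [if_pos hℓ]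
        have hxℓ : (0:ℝ) ≤ x ℓ := hx ℓ
        have : (0:ℝ) ≤ -x ℓ / p ℓ := by
          rw [div_nonneg_iff]; right; exact ⟨by linarith, hℓ.le⟩
        exact_mod_cast this
      · rw [if_neg hℓ]; exact le_top
    exact_mod_cast this
  -- feasibility of ηstar
  have hfeas : 0 ≤ x + ηstar • p := by
    intro ℓ
    simp only [Pi.zero_apply, Pi.add_apply, Pi.smul_apply, smul_eq_mul]
    by_cases hℓ : p ℓ < 0
    · have h := hstar_hat ℓ hℓ
      have h2 := (le_div_iff_of_neg hℓ).mp h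
      have hxℓ : (0:ℝ) ≤ x ℓ := hx ℓ
      linarith
    · have hxℓ : (0:ℝ) ≤ x ℓ := hx ℓ
      nlinarith [mul_nonneg hstar0 (not_lt.mp hℓ)]
  refine ⟨⟨hstar0, hfeas⟩, ?_⟩
  intro η hη hηfeas
  rw [hf, hf]
  -- feasible η satisfies η ≤ each hat, hence (η : WithTop ℝ) ≤ inf
  have hηinf : (η : WithTop ℝ) ≤ (Finset.univ.inf fun ℓ : Fin n =>
      if p ℓ < 0 then ((-(x ℓ) / p ℓ : ℝ) : WithTop ℝ) else ⊤) := by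
    refine Finset.le_inf fun ℓ _ => ?_
    by_cases hℓ : p ℓ < 0
    · rw [if_pos hℓ]
      have h := hηfeas ℓ
      simp only [Pi.zero_apply, Pi.add_apply, Pi.smul_apply, smul_eq_mul] at h
      have : η ≤ -(x ℓ) / p ℓ := by
        rw [le_div_iff_of_neg hℓ]; linarith
      exact_mod_cast this
    · rw [if_neg hℓ]; exact le_top
  rcases min_cases ((η' : ℝ) : WithTop ℝ) (Finset.univ.inf fun ℓ : Fin n =>
      if p ℓ < 0 then ((-(x ℓ) / p ℓ : ℝ) : WithTop ℝ) else ⊤) with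
    ⟨hmin, _⟩ | ⟨hmin, _⟩
  · -- ηstar = η' : global minimum of the quadratic
    have heq : ηstar = η' := by
      have : (ηstar : WithTop ℝ) = ((η' : ℝ) : WithTop ℝ) := by rw [hηstar, hmin]
      exact_mod_cast this
    have hca : c = -(ηstar * a) := by rw [heq]; linarith [hη'a]
    nlinarith [sq_nonneg (η - ηstar), hapos]
  · -- ηstar = inf of hats, so η ≤ ηstar ≤ η'
    have hηle : η ≤ ηstar := by
      have : (η : WithTop ℝ) ≤ (ηstar : WithTop ℝ) := by
        rw [hηstar, hmin]; exact hηinf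
      exact_mod_cast this
    have hca : c = -(η' * a) := by linarith [hη'a]
    nlinarith [mul_nonneg (sub_nonneg.mpr hηle)
      (by linarith : (0:ℝ) ≤ 2 * η' - η - ηstar), hapos]
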